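/- arXiv:1707.05509 — 2 statements merged into one kernel-verified Lean document; each statement's English description precedes it below -/
import Mathlib

section
/- Let n ≥ 1 be odd. The set of points of the Ulam set on the line segment L_n (points a v_0 + b v_1 with a + b = n+1) equals exactly the set of points (n+1-b) v_0 + b v_1 where b ranges over the odd integers 1, 3, 5, ..., n. -/
/-- The Kravitz–Steinerberger description of the Ulam lattice pairs. -/
def UlamPair (a b : ℕ) : Prop :=
  b = 1 ∨ a = 1 ∨ (3 ≤ a ∧ 3 ≤ b ∧ Odd a ∧ Odd b)

/-- For odd `n ≥ 1`, the Ulam set points on the line segment `L_n` are exactly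
the points `(n+1-b) v₀ + b v₁` where `b` ranges over the odd integers
`1, 3, 5, …, n`. -/
theorem ulam_points_on_segment_odd_param
    (v0 v1 : EuclideanSpace ℝ (Fin 2))
    (hind : LinearIndependent ℝ ![v0, v1])
    (n : ℕ) (hn : 1 ≤ n) (hodd : Odd n) :
    {p : EuclideanSpace ℝ (Fin 2) |
        ∃ a b : ℕ, UlamPair a b ∧ a + b = n + 1 ∧
          p = (a : ℝ) • v0 + (b : ℝ) • v1}
      = {p : EuclideanSpace ℝ (Fin 2) |
          ∃ b : ℕ, Odd b ∧ b ≤ n ∧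
            p = ((n + 1 - b : ℕ) : ℝ) • v0 + (b : ℝ) • v1} := by
  ext p
  simp only [Set.mem_setOf_eq]
  constructor
  · rintro ⟨a, b, hpair, hab, hp⟩
    refine ⟨b, ?_, ?_, ?_⟩
    · rcases hpair with h1 | h1 | ⟨_, _, _, hb⟩
      · exact h1 ▸ odd_one
      · have : b = n := by omega
        exact this ▸ hodd
      · exact hb
    · rcases hpair with h1 | h1 | ⟨ha3, _, _, _⟩ <;> omega
    · have : n + 1 - b = a := by omega
      rw [this]; exact hp
  · rintro ⟨b, hbodd, hbn, hp⟩
    refine ⟨n + 1 - b, b, ?_, by omega, hp⟩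
    unfold UlamPair
    rcases Nat.eq_or_lt_of_le hbn with h | h
    · right; left; omega
    · by_cases hb1 : b = 1
      · left; exact hb1
      · right; right
        have hb3 : 3 ≤ b := by
          rcases hbodd with ⟨k, hk⟩; omega
        have haodd : Odd (n + 1 - b) := by
          rcases hbodd with ⟨k, hk⟩
          rcases hodd with ⟨m, hm⟩
          exact ⟨m - k, by omega⟩
        have ha3 : 3 ≤ n + 1 - b := by
          rcases haodd with ⟨j, hj⟩
          by_contra hc
          have : n + 1 - b = 1 := by omega
          omega
        exact ⟨ha3, hb3, haodd, hbodd⟩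
end

section
/- Let v_0 = (1, φ) and v_1 = (φ, 1) with φ the golden ratio. For odd n ≡ 1 (mod 4), the minimal-norm Ulam point on L_n is ((n+1)/2)(v_0 + v_1) = ((n+1)(1+φ)/2, (n+1)(1+φ)/2), whose Euclidean norm is (n+1)(1+φ)/√2; and this norm is strictly smaller than the norm ‖v_0 + n v_1‖ = ‖(1+nφ, φ+n)‖ of the boundary points for all n ≥ 3 with n ≡ 1 (mod 4). -/
noncomputable section

/-- The golden ratio. -/
def φ : ℝ := (1 + Real.sqrt 5) / 2

/-- `v₀ = (1, φ)`. -/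
def v0 : EuclideanSpace ℝ (Fin 2) := (WithLp.equiv 2 (Fin 2 → ℝ)).symm ![1, φ]

/-- `v₁ = (φ, 1)`. -/
def v1 : EuclideanSpace ℝ (Fin 2) := (WithLp.equiv 2 (Fin 2 → ℝ)).symm ![φ, 1]

lemma norm_two (x : EuclideanSpace ℝ (Fin 2)) :
    ‖x‖ = Real.sqrt ((x 0)^2 + (x 1)^2) := by
  rw [EuclideanSpace.norm_eq]
  simp [Fin.sum_univ_two, Real.norm_eq_abs, sq_abs]

lemma phi_gt : (3:ℝ)/2 < φ := by
  have : (2:ℝ) < Real.sqrt 5 := by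
    rw [show (2:ℝ) = Real.sqrt 4 by rw [show (4:ℝ) = 2^2 by norm_num, Real.sqrt_sq]; norm_num]
    exact Real.sqrt_lt_sqrt (by norm_num) (by norm_num)
  unfold φ; linarith

/-- For `n ≡ 1 (mod 4)` with `n ≥ 3`, the minimal-norm Ulam point on `L_n`
is `((n+1)/2)(v₀+v₁)`, whose Euclidean norm is `(n+1)(1+φ)/√2`, and this
norm is strictly smaller than the norm `‖v₀ + n v₁‖` of the boundary
points. -/
theorem ulam_midpoint_norm_golden :
    ∀ n : ℕ, 3 ≤ n → n % 4 = 1 →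
      ‖(((n : ℝ) + 1) / 2) • (v0 + v1)‖ = (n + 1) * (1 + φ) / Real.sqrt 2 ∧
      (∀ a b : ℕ, Odd a → Odd b → 1 ≤ a → 1 ≤ b → a + b = n + 1 →
        ‖(((n : ℝ) + 1) / 2) • (v0 + v1)‖ ≤ ‖(a : ℝ) • v0 + (b : ℝ) • v1‖) ∧
      ‖(((n : ℝ) + 1) / 2) • (v0 + v1)‖ < ‖v0 + (n : ℝ) • v1‖ := by
  intro n hn _
  have hφ := phi_gt
  have hn' : (3:ℝ) ≤ (n:ℝ) := by exact_mod_cast hn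
  have h2 : (0:ℝ) < Real.sqrt 2 := Real.sqrt_pos.mpr (by norm_num)
  have h2sq : Real.sqrt 2 ^ 2 = 2 := Real.sq_sqrt (by norm_num)
  have key : ∀ x : EuclideanSpace ℝ (Fin 2), ‖x‖ = Real.sqrt ((x 0)^2 + (x 1)^2) := norm_two
  have hmid : ‖(((n : ℝ) + 1) / 2) • (v0 + v1)‖
      = Real.sqrt ((((n:ℝ)+1)/2 * (1+φ))^2 + (((n:ℝ)+1)/2 * (φ+1))^2) := by
    rw [key]; simp [v0, v1, PiLp.toLp_apply]; ring_nf
  refine ⟨?_, ?_, ?_⟩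
  · rw [hmid]
    rw [show (((n:ℝ)+1)/2 * (1+φ))^2 + (((n:ℝ)+1)/2 * (φ+1))^2
        = (((n:ℝ)+1) * (1+φ) / Real.sqrt 2)^2 by field_simp; nlinarith [h2sq]]
    exact Real.sqrt_sq (by positivity)
  · intro a b _ _ _ _ hab
    have hab' : (a:ℝ) + b = (n:ℝ) + 1 := by exact_mod_cast hab
    rw [hmid, key]
    have hc : ((a:ℝ) • v0 + (b:ℝ) • v1) 0 = a + b*φ ∧ ((a:ℝ) • v0 + (b:ℝ) • v1) 1 = a*φ + b := by
      constructor <;> simp [v0, v1, PiLp.toLp_apply]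
    rw [hc.1, hc.2]
    apply Real.sqrt_le_sqrt
    rw [show ((n:ℝ) + 1) = (a:ℝ) + b from hab'.symm]
    nlinarith [sq_nonneg ((a:ℝ) + b*φ - (a*φ + b))]
  · rw [hmid, key]
    have hc : (v0 + (n:ℝ) • v1) 0 = 1 + n*φ ∧ (v0 + (n:ℝ) • v1) 1 = φ + n := by
      constructor <;> simp [v0, v1, PiLp.toLp_apply]
    rw [hc.1, hc.2]
    apply Real.sqrt_lt_sqrt (by positivity)
    have h : (0:ℝ) < ((n:ℝ) - 1) * (φ - 1) := by
      apply mul_pos <;> linarith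
    nlinarith [mul_pos h h]

end
end
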